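/- If f is an entire function on ℂ, U ~ N(0, σ²) and V ~ N(0, σ²) are independent real Gaussian random variables independent of the real random variable X, and f(X + U + iV) is integrable, then E[f(X + U + iV) | X] = f(X). -/

import Mathlib

open MeasureTheory ProbabilityTheory Real Set Complex
open scoped NNReal ENNReal

section aux

lemma circle_avg {f : ℂ → ℂ} (hf : Differentiable ℂ f) (c : ℂ) {R : ℝ} (hR : 0 < R) :
    ∫ θ in Set.Ioo (-π) π, f (circleMap c R θ) = (2 * π : ℝ) • f c := by
  have key : (∮ z in C(c, R), (z - c)⁻¹ • f z) = (2 * π * Complex.I) • f c :=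
    Complex.circleIntegral_sub_center_inv_smul_of_differentiable_on_off_countable hR
      Set.countable_empty (hf.continuous.continuousOn)
      (fun z _ => hf z)
  rw [circleIntegral] at key
  have h1 : ∀ θ : ℝ, deriv (circleMap c R) θ • (circleMap c R θ - c)⁻¹ • f (circleMap c R θ)
      = Complex.I • f (circleMap c R θ) := by
    intro θ
    rw [deriv_circleMap, circleMap_sub_center]
    have hne : circleMap 0 R θ ≠ 0 := circleMap_ne_center hR.ne' (c := 0)
    field_simp [smul_eq_mul]
    rw [smul_smul, one_div, mul_comm (circleMap 0 R θ) I, mul_assoc, mul_inv_cancel₀ hne, mul_one]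
  simp only [h1] at key
  rw [intervalIntegral.integral_smul] at key
  have h2 : (∫ θ in (0:ℝ)..(2*π), f (circleMap c R θ)) = (2 * π : ℝ) • f c := by
    have : (2 * ↑π * Complex.I) • f c = Complex.I • ((2 * π : ℝ) • f c) := by
      simp [smul_smul, Complex.real_smul]
      ring
    rw [this] at key
    exact smul_right_injective ℂ Complex.I_ne_zero key
  have hper : Function.Periodic (fun θ => f (circleMap c R θ)) (2 * π) :=
    fun θ => by simp [periodic_circleMap c R θ]
  have h4 : (∫ θ in (-π)..(π:ℝ), f (circleMap c R θ))
      = ∫ θ in (0:ℝ)..(0 + 2*π), f (circleMap c R θ) := by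
    simpa [show (-π:ℝ) + 2*π = π from by ring] using hper.intervalIntegral_add_eq (-π) 0
  rw [← MeasureTheory.integral_Ioc_eq_integral_Ioo,
    ← intervalIntegral.integral_of_le (by nlinarith [pi_pos] : (-π : ℝ) ≤ π), h4, zero_add, h2]

lemma radial_int {b : ℝ} (hb : 0 < b) :
    ∫ r in Set.Ioi (0:ℝ), r * Real.exp (-b * r^2) = (2*b)⁻¹ := by
  have hderiv : ∀ x ∈ Set.Ici (0:ℝ),
      HasDerivAt (fun r : ℝ => -(2*b)⁻¹ * Real.exp (-b*r^2)) (x * Real.exp (-b * x^2)) x := by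
    intro x _
    have h1 : HasDerivAt (fun r : ℝ => -b*r^2) (-b * (2*x)) x := by
      simpa using ((hasDerivAt_pow 2 x).const_mul (-b))
    have := (h1.exp).const_mul (-(2*b)⁻¹)
    refine this.congr_deriv ?_
    have hb0 : b ≠ 0 := hb.ne'
    have e : b * b⁻¹ = 1 := mul_inv_cancel₀ hb0
    linear_combination (x * Real.exp (-b * x^2)) * e
  have htend : Filter.Tendsto (fun r : ℝ => -(2*b)⁻¹ * Real.exp (-b*r^2)) Filter.atTop (nhds 0) := by
    have : Filter.Tendsto (fun r : ℝ => -b*r^2) Filter.atTop Filter.atBot := by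
      apply Filter.Tendsto.const_mul_atTop_of_neg (by linarith : -b < 0)
      exact Filter.tendsto_pow_atTop (by norm_num)
    simpa using (Real.tendsto_exp_atBot.comp this).const_mul (-(2*b)⁻¹)
  have := integral_Ioi_of_hasDerivAt_of_tendsto' hderiv
    ((integrable_mul_exp_neg_mul_sq hb).integrableOn) htend
  rw [this]
  simp

lemma prod_gauss {σ2 : NNReal} (hσ2 : σ2 ≠ 0) :
    (gaussianReal 0 σ2).prod (gaussianReal 0 σ2)
      = (volume : Measure (ℝ × ℝ)).withDensity
          (fun w => gaussianPDF 0 σ2 w.1 * gaussianPDF 0 σ2 w.2) := by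
  refine Measure.prod_eq (fun s t hs ht => ?_)
  rw [withDensity_apply _ (hs.prod ht), Measure.volume_eq_prod, ← Measure.prod_restrict,
    lintegral_prod_mul ((measurable_gaussianPDF 0 σ2).aemeasurable)
      ((measurable_gaussianPDF 0 σ2).aemeasurable),
    gaussianReal_apply _ hσ2 s, gaussianReal_apply _ hσ2 t]

variable {σ2 : NNReal}

noncomputable def ρn (σ2 : NNReal) : ℝ → NNReal := fun x => (gaussianPDFReal 0 σ2 x).toNNReal

lemma ρn_coe (x : ℝ) : ((ρn σ2 x : ℝ≥0) : ℝ) = gaussianPDFReal 0 σ2 x :=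
  Real.coe_toNNReal _ (gaussianPDFReal_nonneg 0 σ2 x)

lemma ρn_meas : Measurable (ρn σ2) := (measurable_gaussianPDFReal 0 σ2).real_toNNReal

lemma gaussianPDF_eq_coe (x : ℝ) : gaussianPDF 0 σ2 x = ((ρn σ2 x : ℝ≥0) : ℝ≥0∞) := rfl

lemma dens_eq (hσ2 : σ2 ≠ 0) (r θ : ℝ) :
    ((ρn σ2 (r * Real.cos θ) * ρn σ2 (r * Real.sin θ) : ℝ≥0) : ℝ)
      = (2 * π * σ2)⁻¹ * rexp (-(2 * (σ2:ℝ))⁻¹ * r ^ 2) := by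
  push_cast [ρn_coe]
  simp only [gaussianPDFReal_def]
  have hσpos : (0:ℝ) < σ2 := lt_of_le_of_ne (σ2.coe_nonneg) (by exact_mod_cast (Ne.symm hσ2))
  have ht : (0:ℝ) ≤ 2 * π * σ2 := by positivity
  have hsq : (r * Real.cos θ) ^ 2 + (r * Real.sin θ) ^ 2 = r ^ 2 := by
    rw [mul_pow, mul_pow, ← mul_add, Real.cos_sq_add_sin_sq, mul_one]
  rw [show ((Real.sqrt (2*π*σ2))⁻¹ * rexp (-(r * Real.cos θ - 0)^2 / (2*σ2)))
        * ((Real.sqrt (2*π*σ2))⁻¹ * rexp (-(r * Real.sin θ - 0)^2 / (2*σ2)))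
      = (Real.sqrt (2*π*σ2) * Real.sqrt (2*π*σ2))⁻¹
        * (rexp (-(r * Real.cos θ - 0)^2 / (2*σ2)) * rexp (-(r * Real.sin θ - 0)^2 / (2*σ2)))
      from by rw [mul_inv]; ring]
  rw [Real.mul_self_sqrt ht, ← Real.exp_add]
  rw [show -(r * Real.cos θ - 0)^2 / (2*(σ2:ℝ)) + -(r * Real.sin θ - 0)^2 / (2*(σ2:ℝ))
    = -(2 * (σ2:ℝ))⁻¹ * r ^ 2 from by linear_combination (-(2*(σ2:ℝ))⁻¹) * hsq]

lemma point_eq (c : ℂ) (r θ : ℝ) :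
    c + ((r * Real.cos θ : ℝ) : ℂ) + ((r * Real.sin θ : ℝ) : ℂ) * Complex.I
      = circleMap c r θ := by
  simp [circleMap, Complex.exp_mul_I]
  push_cast
  ring

lemma gaussian_mean {f : ℂ → ℂ} (hf : Differentiable ℂ f) (hσ2 : σ2 ≠ 0) (c : ℂ)
    (hint : Integrable (fun w : ℝ × ℝ => f (c + (w.1 : ℂ) + (w.2 : ℂ) * Complex.I))
      ((gaussianReal 0 σ2).prod (gaussianReal 0 σ2))) :
    (∫ w : ℝ × ℝ, f (c + (w.1 : ℂ) + (w.2 : ℂ) * Complex.I)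
      ∂((gaussianReal 0 σ2).prod (gaussianReal 0 σ2))) = f c := by
  classical
  set F : ℝ × ℝ → ℂ := fun w => f (c + (w.1 : ℂ) + (w.2 : ℂ) * Complex.I) with hF
  have hσpos : (0:ℝ) < σ2 := lt_of_le_of_ne (σ2.coe_nonneg) (by exact_mod_cast (Ne.symm hσ2))
  have hwd : (gaussianReal 0 σ2).prod (gaussianReal 0 σ2)
      = (volume : Measure (ℝ × ℝ)).withDensity
          (fun w => ((ρn σ2 w.1 * ρn σ2 w.2 : ℝ≥0) : ℝ≥0∞)) := by
    rw [prod_gauss hσ2]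
    congr 1
  have hmeasρ : Measurable (fun w : ℝ × ℝ => ρn σ2 w.1 * ρn σ2 w.2) :=
    (ρn_meas.comp measurable_fst).mul (ρn_meas.comp measurable_snd)
  set G : ℝ × ℝ → ℂ := fun w => (ρn σ2 w.1 * ρn σ2 w.2 : ℝ≥0) • F w with hG
  have hGint : Integrable G volume := by
    rw [hG]
    rw [← integrable_withDensity_iff_integrable_smul hmeasρ, ← hwd]
    exact hint
  have step1 : (∫ w, F w ∂((gaussianReal 0 σ2).prod (gaussianReal 0 σ2)))
      = ∫ w, G w := by
    rw [hwd, integral_withDensity_eq_integral_smul hmeasρ]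
  -- polar coordinates
  have step2 : (∫ w, G w) = ∫ p in polarCoord.target, p.1 • G (polarCoord.symm p) :=
    (integral_comp_polarCoord_symm G).symm
  -- integrability in polar coordinates
  set B : ℝ × ℝ → ℝ × ℝ →L[ℝ] ℝ × ℝ := fun p =>
    LinearMap.toContinuousLinearMap (Matrix.toLin (Module.Basis.finTwoProd ℝ) (Module.Basis.finTwoProd ℝ)
      !![Real.cos p.2, -p.1 * Real.sin p.2; Real.sin p.2, p.1 * Real.cos p.2]) with hB
  have hBderiv : ∀ p ∈ polarCoord.target, HasFDerivWithinAt polarCoord.symm (B p)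
      polarCoord.target p := fun p _ => (hasFDerivAt_polarCoord_symm p).hasFDerivWithinAt
  have hB_det : ∀ p, (B p).det = p.1 := by
    intro p
    conv_rhs => rw [← one_mul p.1, ← Real.cos_sq_add_sin_sq p.2]
    simp only [hB, neg_mul, LinearMap.det_toContinuousLinearMap, LinearMap.det_toLin,
      Matrix.det_fin_two_of, sub_neg_eq_add]
    try ring
  have hIO : IntegrableOn (fun p : ℝ × ℝ => p.1 • G (polarCoord.symm p))
      polarCoord.target volume := by
    have him : IntegrableOn G (polarCoord.symm '' polarCoord.target) volume := by
      rw [polarCoord.symm_image_target_eq_source]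
      exact hGint.integrableOn
    have := (integrableOn_image_iff_integrableOn_abs_det_fderiv_smul volume
      polarCoord.open_target.measurableSet hBderiv
      (polarCoord.symm.injOn) G).mp him
    refine this.congr_fun (fun p hp => ?_) polarCoord.open_target.measurableSet
    beta_reduce
    rw [hB_det, abs_of_pos hp.1]
  rw [step1, step2]
  have htarget : polarCoord.target = Set.Ioi (0:ℝ) ×ˢ Set.Ioo (-π) π := rfl
  rw [htarget] at hIO ⊢
  rw [Measure.volume_eq_prod] at hIO ⊢
  rw [setIntegral_prod _ hIO]
  have hinner : ∀ r ∈ Set.Ioi (0:ℝ),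
      (∫ θ in Set.Ioo (-π) π, (r, θ).1 • G (polarCoord.symm (r, θ)))
        = (r * ((2*π*σ2)⁻¹ * rexp (-(2*(σ2:ℝ))⁻¹ * r^2)) * (2*π)) • f c := by
    intro r hr
    have hptw : ∀ θ : ℝ, (r, θ).1 • G (polarCoord.symm (r, θ))
        = (r * ((2*π*σ2)⁻¹ * rexp (-(2*(σ2:ℝ))⁻¹ * r^2))) • f (circleMap c r θ) := by
      intro θ
      rw [hG, hF]
      simp only [polarCoord_symm_apply]
      rw [NNReal.smul_def, dens_eq hσ2, point_eq, smul_smul]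
    simp only [hptw]
    rw [integral_smul, circle_avg hf c hr, smul_smul]
    try congr 1
    try ring
  rw [setIntegral_congr_fun measurableSet_Ioi hinner, integral_smul_const]
  have hb : (0:ℝ) < (2*(σ2:ℝ))⁻¹ := by
    have hσpos' : (0:ℝ) < σ2 := hσpos
    positivity
  have hscal : (∫ r in Set.Ioi (0:ℝ),
      r * ((2*π*σ2)⁻¹ * rexp (-(2*(σ2:ℝ))⁻¹ * r^2)) * (2*π)) = 1 := by
    rw [show (fun r : ℝ => r * ((2*π*σ2)⁻¹ * rexp (-(2*(σ2:ℝ))⁻¹ * r^2)) * (2*π))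
        = fun r : ℝ => ((2*π*(σ2:ℝ))⁻¹ * (2*π)) * (r * rexp (-(2*(σ2:ℝ))⁻¹ * r^2))
        from by funext r; ring]
    rw [integral_const_mul, radial_int hb]
    have hπ : (π:ℝ) ≠ 0 := Real.pi_ne_zero
    have hσ : (σ2:ℝ) ≠ 0 := ne_of_gt hσpos
    field_simp
  rw [hscal, one_smul]

end aux


/-- If `f` is entire, `U ~ N(0, σ²)` and `V ~ N(0, σ²)` are independent real Gaussians,
both independent of the real random variable `X`, and `f(X + U + iV)` is integrable, then
`E[f(X + U + iV) | X] = f(X)`. -/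
theorem entire_function_gaussian_unbiased
    {Ω : Type*} [MeasurableSpace Ω] (μ : Measure Ω) [IsProbabilityMeasure μ]
    (f : ℂ → ℂ) (hf : Differentiable ℂ f)
    (X U V : Ω → ℝ) (hX : Measurable X) (hU : Measurable U) (hV : Measurable V)
    (σ2 : NNReal) (hσ2 : 0 < σ2)
    (hUlaw : Measure.map U μ = gaussianReal 0 σ2)
    (hVlaw : Measure.map V μ = gaussianReal 0 σ2)
    (hindep : iIndepFun ![X, U, V] μ)
    (hint : Integrable (fun ω => f (((X ω + U ω : ℝ) : ℂ) + Complex.I * (V ω : ℂ))) μ) :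
    μ[(fun ω => f (((X ω + U ω : ℝ) : ℂ) + Complex.I * (V ω : ℂ)))
        | MeasurableSpace.comap X inferInstance]
      =ᵐ[μ] fun ω => f ((X ω : ℝ) : ℂ) := by
  classical
  set γ := gaussianReal 0 σ2 with hγ
  set ν := Measure.map X μ with hν
  have hσ2' : σ2 ≠ 0 := hσ2.ne'
  set W : Ω → ℝ × ℝ := fun ω => (U ω, V ω) with hW
  have hWmeas : Measurable W := hU.prodMk hV
  have hmeas3 : ∀ i, Measurable (![X, U, V] i) := by
    intro i
    fin_cases i <;> simpa using ‹_›
  -- law of W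
  have hUV : IndepFun U V μ := by
    have := hindep.indepFun (i := 1) (j := 2) (by decide)
    simpa using this
  have hWlaw : Measure.map W μ = γ.prod γ := by
    have h := (indepFun_iff_map_prod_eq_prod_map_map hU.aemeasurable hV.aemeasurable).mp hUV
    rw [hUlaw, hVlaw] at h
    exact h
  -- independence of X and W
  have hXW : IndepFun X W μ := by
    have := (hindep.indepFun_prodMk hmeas3 1 2 0 (by decide) (by decide)).symm
    simpa using this
  set T : Ω → ℝ × (ℝ × ℝ) := fun ω => (X ω, W ω) with hT
  have hTmeas : Measurable T := hX.prodMk hWmeas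
  have hTlaw : Measure.map T μ = ν.prod (γ.prod γ) := by
    rw [hT, hν, ← hWlaw]
    exact (indepFun_iff_map_prod_eq_prod_map_map hX.aemeasurable hWmeas.aemeasurable).mp hXW
  set Ψ : ℝ × (ℝ × ℝ) → ℂ := fun q => f ((q.1 : ℂ) + (q.2.1 : ℂ) + (q.2.2 : ℂ) * Complex.I)
    with hΨ
  have hΨcont : Continuous Ψ := by
    apply hf.continuous.comp
    fun_prop
  set F : Ω → ℂ := fun ω => f (((X ω + U ω : ℝ) : ℂ) + Complex.I * (V ω : ℂ)) with hF
  have hFT : F = fun ω => Ψ (T ω) := by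
    funext ω
    simp only [hF, hΨ, hT, hW]
    congr 1
    push_cast
    ring
  have hΨint : Integrable Ψ (ν.prod (γ.prod γ)) := by
    rw [← hTlaw]
    rw [integrable_map_measure hΨcont.aestronglyMeasurable hTmeas.aemeasurable]
    have : Ψ ∘ T = F := by rw [hFT]; rfl
    rw [this]
    exact hint
  -- a.e. x : the w-section is integrable, so inner integral is f x
  have hae : ∀ᵐ x ∂ν, (∫ w, Ψ (x, w) ∂(γ.prod γ)) = f (x : ℂ) := by
    filter_upwards [hΨint.prod_right_ae] with x hx
    exact gaussian_mean hf hσ2' (x : ℂ) hx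
  -- integrability of f ∘ X
  have hgν : Integrable (fun x : ℝ => f (x : ℂ)) ν := by
    have hnorm : Integrable (fun x => ∫ w, ‖Ψ (x, w)‖ ∂(γ.prod γ)) ν :=
      hΨint.integral_norm_prod_left
    refine hnorm.mono' ((hf.continuous.comp Complex.continuous_ofReal).aestronglyMeasurable) ?_
    filter_upwards [hae, hΨint.prod_right_ae] with x hx hxint
    rw [← hx]
    exact norm_integral_le_integral_norm _
  have hgX : Integrable (fun ω => f ((X ω : ℝ) : ℂ)) μ := by
    have := (integrable_map_measure
      ((hf.continuous.comp Complex.continuous_ofReal).aestronglyMeasurable)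
      hX.aemeasurable).mp (hν ▸ hgν)
    exact this
  -- conditional expectation characterization
  have hm : MeasurableSpace.comap X inferInstance ≤ (inferInstance : MeasurableSpace Ω) :=
    hX.comap_le
  have htrim : SigmaFinite (μ.trim hm) := by infer_instance
  have hXm : Measurable[MeasurableSpace.comap X inferInstance] X :=
    measurable_iff_comap_le.mpr le_rfl
  have hgsm : StronglyMeasurable[MeasurableSpace.comap X inferInstance]
      (fun ω => f ((X ω : ℝ) : ℂ)) :=
    ((hf.continuous.comp Complex.continuous_ofReal).measurable.comp hXm).stronglyMeasurable
  refine (ae_eq_condExp_of_forall_setIntegral_eq hm hint (fun s _ _ => hgX.integrableOn)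
    ?_ ⟨_, hgsm, Filter.EventuallyEq.rfl⟩).symm
  rintro s ⟨A, hA, rfl⟩ -
  have hgae : AEStronglyMeasurable (fun x : ℝ => f ((x : ℝ) : ℂ)) ν :=
    (hf.continuous.comp Complex.continuous_ofReal).aestronglyMeasurable
  have hLHS : (∫ ω in X ⁻¹' A, f ((X ω : ℝ) : ℂ) ∂μ) = ∫ x in A, f ((x : ℝ) : ℂ) ∂ν := by
    rw [hν]
    exact (setIntegral_map hA hgae hX.aemeasurable).symm
  have hpre : T ⁻¹' (A ×ˢ Set.univ) = X ⁻¹' A := by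
    ext ω
    simp [hT]
  have hprodres : (ν.prod (γ.prod γ)).restrict (A ×ˢ Set.univ)
      = (ν.restrict A).prod (γ.prod γ) := by
    rw [← Measure.prod_restrict, Measure.restrict_univ]
  have hΨres : Integrable Ψ ((ν.restrict A).prod (γ.prod γ)) := by
    have h1 : IntegrableOn Ψ (A ×ˢ Set.univ) (ν.prod (γ.prod γ)) := hΨint.integrableOn
    rwa [IntegrableOn, hprodres] at h1
  have hRHS : (∫ ω in X ⁻¹' A, f (((X ω + U ω : ℝ) : ℂ) + Complex.I * (V ω : ℂ)) ∂μ)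
      = ∫ x in A, f ((x : ℝ) : ℂ) ∂ν := by
    have e1 : (∫ ω in X ⁻¹' A, f (((X ω + U ω : ℝ) : ℂ) + Complex.I * (V ω : ℂ)) ∂μ)
        = ∫ ω in T ⁻¹' (A ×ˢ Set.univ), Ψ (T ω) ∂μ := by
      rw [hpre]
      refine setIntegral_congr_fun (hm _ ⟨A, hA, rfl⟩) (fun ω _ => ?_)
      have := congrFun hFT ω
      simpa [hF] using this
    rw [e1, ← setIntegral_map (hA.prod MeasurableSet.univ) hΨcont.aestronglyMeasurable
      hTmeas.aemeasurable, hTlaw, hprodres, integral_prod _ hΨres]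
    refine integral_congr_ae (ae_restrict_of_ae ?_)
    filter_upwards [hae] with x hx
    exact hx
  rw [hLHS, hRHS]
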